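/- Let X, Y ∈ ℝ^{d×K} be such that there exists a symmetric matrix B ∈ ℝ^{d×d} with all eigenvalues in [λ⁻, λ⁺] and Y = BX. Then (Y − λ⁻X)ᵀ(Y − λ⁺X) ⪯ 0 and XᵀY = YᵀX. -/

import Mathlib

open Matrix

lemma stmt_4_aux {d : ℕ} (lm lp : ℝ) (B : Matrix (Fin d) (Fin d) ℝ)
    (hH : B.IsHermitian)
    (hbd : ∀ i, lm ≤ hH.eigenvalues i ∧ hH.eigenvalues i ≤ lp) :
    ((B - lm • 1) * (lp • 1 - B)).PosSemidef := by
  set U : Matrix (Fin d) (Fin d) ℝ := (hH.eigenvectorUnitary : Matrix (Fin d) (Fin d) ℝ) with hUdef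
  set D : Matrix (Fin d) (Fin d) ℝ := diagonal hH.eigenvalues with hDdef
  have hUU : U * star U = 1 := (Matrix.mem_unitaryGroup_iff).mp hH.eigenvectorUnitary.2
  have hUU' : star U * U = 1 := (Matrix.mem_unitaryGroup_iff').mp hH.eigenvectorUnitary.2
  have hspec : B = U * D * star U := by
    have := hH.spectral_theorem
    rw [Unitary.conjStarAlgAut_apply] at this
    exact this
  have h1 : B - lm • 1 = U * (D - lm • 1) * star U := by
    rw [hspec, mul_sub, sub_mul, mul_smul_comm, mul_one, smul_mul_assoc, hUU]
  have h2 : lp • 1 - B = U * (lp • 1 - D) * star U := by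
    rw [hspec, mul_sub, sub_mul, mul_smul_comm, mul_one, smul_mul_assoc, hUU]
  have a1 : D - lm • 1 = diagonal (fun i => hH.eigenvalues i - lm) := by
    ext i j
    by_cases h : i = j <;> simp [hDdef, Matrix.one_apply, Matrix.diagonal_apply, h]
  have a2 : lp • 1 - D = diagonal (fun i => lp - hH.eigenvalues i) := by
    ext i j
    by_cases h : i = j <;> simp [hDdef, Matrix.one_apply, Matrix.diagonal_apply, h]
  have hDprod : (D - lm • 1) * (lp • 1 - D)
      = diagonal (fun i => (hH.eigenvalues i - lm) * (lp - hH.eigenvalues i)) := by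
    rw [a1, a2, diagonal_mul_diagonal]
  have key : (B - lm • 1) * (lp • 1 - B)
      = U * ((D - lm • 1) * (lp • 1 - D)) * star U := by
    rw [h1, h2]
    simp only [← mul_assoc]
    rw [mul_assoc (U * (D - lm • 1)) (star U) U, hUU', mul_one]
  rw [key, hDprod]
  apply Matrix.PosSemidef.mul_mul_conjTranspose_same
  refine Matrix.posSemidef_diagonal_iff.mpr fun i => ?_
  have h := hbd i
  nlinarith [h.1, h.2]

theorem stmt_4 (d K : ℕ) (lm lp : ℝ) (hle : lm ≤ lp)
    (X Y : Matrix (Fin d) (Fin K) ℝ) (B : Matrix (Fin d) (Fin d) ℝ)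
    (hB : B.IsSymm)
    (heig : ∀ v : Fin d → ℝ,
      lm * (v ⬝ᵥ v) ≤ v ⬝ᵥ B.mulVec v ∧ v ⬝ᵥ B.mulVec v ≤ lp * (v ⬝ᵥ v))
    (hY : Y = B * X) :
    (-((Y - lm • X)ᵀ * (Y - lp • X))).PosSemidef ∧ Xᵀ * Y = Yᵀ * X := by
  have hH : B.IsHermitian := by
    rw [Matrix.IsHermitian, conjTranspose_eq_transpose_of_trivial]
    exact hB
  have hbd : ∀ i, lm ≤ hH.eigenvalues i ∧ hH.eigenvalues i ≤ lp := by
    intro i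
    set v : Fin d → ℝ := ⇑(hH.eigenvectorBasis i) with hv
    have hvne : v ≠ 0 := by
      rw [hv, Ne, WithLp.ofLp_eq_zero]
      exact hH.eigenvectorBasis.orthonormal.ne_zero i
    have hvv : 0 < v ⬝ᵥ v := by
      have h := (Matrix.dotProduct_self_star_pos_iff (v := v)).mpr hvne
      simpa using h
    have hmv : B *ᵥ v = hH.eigenvalues i • v := hH.mulVec_eigenvectorBasis i
    have hq : v ⬝ᵥ B *ᵥ v = hH.eigenvalues i * (v ⬝ᵥ v) := by
      rw [hmv, dotProduct_smul, smul_eq_mul]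
    obtain ⟨h1, h2⟩ := heig v
    rw [hq] at h1 h2
    exact ⟨le_of_mul_le_mul_right h1 hvv, le_of_mul_le_mul_right h2 hvv⟩
  have hN : ((B - lm • 1) * (lp • 1 - B)).PosSemidef := stmt_4_aux lm lp B hH hbd
  constructor
  · have e1 : Y - lm • X = (B - lm • 1) * X := by
      rw [hY, Matrix.sub_mul, Matrix.smul_mul, Matrix.one_mul]
    have e2 : Y - lp • X = -((lp • 1 - B) * X) := by
      rw [hY, Matrix.sub_mul, Matrix.smul_mul, Matrix.one_mul, neg_sub]
    have hsymm : (B - lm • 1)ᵀ = B - lm • 1 := by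
      rw [transpose_sub, transpose_smul, transpose_one, hB]
    have e3 : -((Y - lm • X)ᵀ * (Y - lp • X)) = Xᴴ * ((B - lm • 1) * (lp • 1 - B)) * X := by
      rw [e1, e2, Matrix.mul_neg, neg_neg, transpose_mul, hsymm,
        conjTranspose_eq_transpose_of_trivial, Matrix.mul_assoc, Matrix.mul_assoc,
        Matrix.mul_assoc]
    rw [e3]
    exact hN.conjTranspose_mul_mul_same X
  · rw [hY, transpose_mul, hB, Matrix.mul_assoc]
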